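/- Let Π ∈ R^{R×n} be a matrix with exactly s nonzero entries per column, each of absolute value s^{-1/2}, and suppose that for every row i the set B_i = {j ≤ m : Π_{i,j} ≠ 0} has size at most K. Then for any y ∈ R^n and any 1 ≤ p ≤ 2, ‖Π (y_{1:m})‖_p ≤ s^{1/p − 1/2} K^{1 − 1/p} ‖y_{1:m}‖_p, where y_{1:m} denotes y with all coordinates beyond index m set to zero. -/

import Mathlib

open Finset

/-- The entrywise `ℓ_p` norm on `Fin n → ℝ`. -/
noncomputable def pnorm {n : ℕ} (p : ℝ) (x : Fin n → ℝ) : ℝ :=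
  (∑ i, |x i| ^ p) ^ (1 / p)

private lemma aux_rpow_sum_le {ι : Type*} (B : Finset ι) (f : ι → ℝ)
    (hf : ∀ j, 0 ≤ f j) {p : ℝ} (hp : 1 ≤ p) :
    (∑ j ∈ B, f j) ^ p ≤ (B.card : ℝ) ^ (p - 1) * ∑ j ∈ B, f j ^ p := by
  have hp0 : (0:ℝ) < p := lt_of_lt_of_le one_pos hp
  rcases B.eq_empty_or_nonempty with h | h
  · subst h
    simp [Real.zero_rpow (ne_of_gt hp0)]
  · have hc : (0:ℝ) < B.card := by exact_mod_cast h.card_pos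
    have key := Real.rpow_arith_mean_le_arith_mean_rpow B (fun _ => (B.card : ℝ)⁻¹) f
      (fun i _ => by positivity) (by rw [Finset.sum_const, nsmul_eq_mul]; exact mul_inv_cancel₀ hc.ne') (fun i _ => hf i) hp
    rw [← Finset.mul_sum, ← Finset.mul_sum,
      Real.mul_rpow (by positivity) (Finset.sum_nonneg fun i _ => hf i),
      Real.inv_rpow hc.le] at key
    have h2 := mul_le_mul_of_nonneg_left key (Real.rpow_pos_of_pos hc p).le
    rw [← mul_assoc, mul_inv_cancel₀ (ne_of_gt (Real.rpow_pos_of_pos hc p)), one_mul,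
      ← mul_assoc] at h2
    calc (∑ j ∈ B, f j) ^ p ≤ (B.card:ℝ) ^ p * (B.card:ℝ)⁻¹ * ∑ j ∈ B, f j ^ p := h2
      _ = (B.card : ℝ) ^ (p - 1) * ∑ j ∈ B, f j ^ p := by
          rw [← Real.rpow_neg_one (B.card:ℝ), ← Real.rpow_add hc]
          ring_nf

private lemma pnorm_nonneg {n : ℕ} (p : ℝ) (x : Fin n → ℝ) : 0 ≤ pnorm p x := by
  unfold pnorm
  positivity

/-- If `P` has exactly `s` nonzero entries per column, each of absolute value
`s^{-1/2}`, and each row meets at most `K` of the first `m` columns in a nonzero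
entry, then `‖P (y_{1:m})‖_p ≤ s^{1/p - 1/2} K^{1 - 1/p} ‖y_{1:m}‖_p`. -/
theorem sparse_embedding_pnorm_bound (n R s K m : ℕ)
    (P : Matrix (Fin R) (Fin n) ℝ)
    (hcol : ∀ j, (Finset.univ.filter fun i => P i j ≠ 0).card = s)
    (hval : ∀ i j, P i j ≠ 0 → |P i j| = (s : ℝ) ^ (-(1 / 2) : ℝ))
    (hrow : ∀ i, (Finset.univ.filter fun j : Fin n => (j : ℕ) < m ∧ P i j ≠ 0).card ≤ K)
    (p : ℝ) (hp : 1 ≤ p) (hp2 : p ≤ 2) (y : Fin n → ℝ) :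
    pnorm p (P.mulVec fun j => if (j : ℕ) < m then y j else 0) ≤
      (s : ℝ) ^ (1 / p - 1 / 2) * (K : ℝ) ^ (1 - 1 / p) *
        pnorm p (fun j : Fin n => if (j : ℕ) < m then y j else 0) := by
  have hp0 : (0:ℝ) < p := lt_of_lt_of_le one_pos hp
  set z : Fin n → ℝ := fun j => if (j : ℕ) < m then y j else 0 with hzdef
  -- degenerate cases: mulVec is zero
  have hzero : (∀ i, P.mulVec z i = 0) →
      pnorm p (P.mulVec z) ≤
        (s : ℝ) ^ (1 / p - 1 / 2) * (K : ℝ) ^ (1 - 1 / p) * pnorm p z := by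
    intro h0
    have : pnorm p (P.mulVec z) = 0 := by
      unfold pnorm
      rw [Finset.sum_congr rfl fun i _ => by
        rw [h0 i, abs_zero, Real.zero_rpow (ne_of_gt hp0)]]
      simp [Real.zero_rpow (by positivity : 1/p ≠ 0), Real.zero_rpow (show p⁻¹ ≠ 0 by positivity)]
    rw [this]
    have h1 : (0:ℝ) ≤ (s : ℝ) ^ (1 / p - 1 / 2) := Real.rpow_nonneg (by positivity) _
    have h2 : (0:ℝ) ≤ (K : ℝ) ^ (1 - 1 / p) := Real.rpow_nonneg (by positivity) _
    exact mul_nonneg (mul_nonneg h1 h2) (pnorm_nonneg p z)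
  by_cases hs0 : s = 0
  · -- all entries of P are zero
    have hP : ∀ i j, P i j = 0 := by
      intro i j
      by_contra h
      have := hcol j
      rw [hs0, Finset.card_eq_zero] at this
      exact absurd this (Finset.nonempty_iff_ne_empty.mp ⟨i, Finset.mem_filter.mpr ⟨Finset.mem_univ i, h⟩⟩)
    apply hzero
    intro i
    simp [Matrix.mulVec, dotProduct, hP]
  by_cases hK0 : K = 0
  · apply hzero
    intro i
    have hempty := hrow i
    rw [hK0, Nat.le_zero, Finset.card_eq_zero] at hempty
    have : ∀ j : Fin n, (j:ℕ) < m → P i j = 0 := by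
      intro j hj
      by_contra h
      have : j ∈ (Finset.univ.filter fun j : Fin n => (j : ℕ) < m ∧ P i j ≠ 0) :=
        Finset.mem_filter.mpr ⟨Finset.mem_univ j, hj, h⟩
      rw [hempty] at this
      exact absurd this (Finset.notMem_empty j)
    simp only [Matrix.mulVec, dotProduct]
    apply Finset.sum_eq_zero
    intro j _
    show P i j * z j = 0
    by_cases hj : (j:ℕ) < m
    · rw [this j hj, zero_mul]
    · simp [hzdef, hj]
  -- main case
  have hs : (0:ℝ) < s := by exact_mod_cast Nat.pos_of_ne_zero hs0
  have hK : (0:ℝ) < K := by exact_mod_cast Nat.pos_of_ne_zero hK0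
  set a : ℝ := (s : ℝ) ^ (-(1 / 2) : ℝ) with hadef
  have ha : 0 < a := Real.rpow_pos_of_pos hs _
  set B : Fin R → Finset (Fin n) :=
    fun i => Finset.univ.filter fun j : Fin n => (j : ℕ) < m ∧ P i j ≠ 0 with hBdef
  -- Step 1: pointwise bound
  have step1 : ∀ i, |P.mulVec z i| ≤ a * ∑ j ∈ B i, |z j| := by
    intro i
    have hsum : P.mulVec z i = ∑ j ∈ B i, P i j * z j := by
      simp only [Matrix.mulVec, dotProduct]
      rw [eq_comm]
      apply Finset.sum_subset (Finset.filter_subset _ _)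
      intro j _ hj
      simp only [Finset.mem_filter, Finset.mem_univ, true_and, not_and, not_not] at hj
      show P i j * z j = 0
      by_cases hjm : (j:ℕ) < m
      · rw [hj hjm, zero_mul]
      · simp [hzdef, hjm]
    rw [hsum]
    calc |∑ j ∈ B i, P i j * z j| ≤ ∑ j ∈ B i, |P i j * z j| := Finset.abs_sum_le_sum_abs _ _
      _ = ∑ j ∈ B i, a * |z j| := by
          apply Finset.sum_congr rfl
          intro j hj
          simp only [hBdef, Finset.mem_filter] at hj
          rw [abs_mul, hval i j hj.2.2]
      _ = a * ∑ j ∈ B i, |z j| := by rw [Finset.mul_sum]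
  -- Step 2: each |..|^p bounded
  have step2 : ∀ i, |P.mulVec z i| ^ p ≤ a ^ p * ((K:ℝ) ^ (p-1) * ∑ j ∈ B i, |z j| ^ p) := by
    intro i
    have h1 : |P.mulVec z i| ^ p ≤ (a * ∑ j ∈ B i, |z j|) ^ p :=
      Real.rpow_le_rpow (abs_nonneg _) (step1 i) hp0.le
    have h2 : (a * ∑ j ∈ B i, |z j|) ^ p = a ^ p * (∑ j ∈ B i, |z j|) ^ p :=
      Real.mul_rpow ha.le (Finset.sum_nonneg fun j _ => abs_nonneg _)
    have h3 : (∑ j ∈ B i, |z j|) ^ p ≤ ((B i).card : ℝ) ^ (p-1) * ∑ j ∈ B i, |z j| ^ p :=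
      aux_rpow_sum_le _ _ (fun j => abs_nonneg _) hp
    have h4 : ((B i).card : ℝ) ^ (p-1) ≤ (K:ℝ) ^ (p-1) := by
      apply Real.rpow_le_rpow (by positivity) _ (by linarith)
      exact_mod_cast hrow i
    calc |P.mulVec z i| ^ p ≤ a ^ p * (∑ j ∈ B i, |z j|) ^ p := by rw [← h2]; exact h1
      _ ≤ a ^ p * (((B i).card : ℝ) ^ (p-1) * ∑ j ∈ B i, |z j| ^ p) := by
          apply mul_le_mul_of_nonneg_left h3 (by positivity)
      _ ≤ a ^ p * ((K:ℝ) ^ (p-1) * ∑ j ∈ B i, |z j| ^ p) := by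
          apply mul_le_mul_of_nonneg_left _ (by positivity)
          exact mul_le_mul_of_nonneg_right h4
            (Finset.sum_nonneg fun j _ => Real.rpow_nonneg (abs_nonneg _) _)
  -- Step 3: double counting
  have step3 : ∑ i, ∑ j ∈ B i, |z j| ^ p = (s:ℝ) * ∑ j, |z j| ^ p := by
    have : ∀ i : Fin R, ∑ j ∈ B i, |z j| ^ p
        = ∑ j : Fin n, if (j:ℕ) < m ∧ P i j ≠ 0 then |z j| ^ p else 0 := by
      intro i
      simp only [hBdef]
      rw [Finset.sum_filter]
    rw [Finset.sum_congr rfl fun i _ => this i, Finset.sum_comm]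
    rw [Finset.mul_sum]
    apply Finset.sum_congr rfl
    intro j _
    by_cases hjm : (j:ℕ) < m
    · have : ∀ i : Fin R, (if (j:ℕ) < m ∧ P i j ≠ 0 then |z j| ^ p else 0)
          = if P i j ≠ 0 then |z j| ^ p else 0 := by
        intro i; simp [hjm]
      rw [Finset.sum_congr rfl fun i _ => this i, ← Finset.sum_filter,
        Finset.sum_const, hcol j, nsmul_eq_mul]
    · have hz0 : |z j| ^ p = 0 := by
        simp [hzdef, hjm, Real.zero_rpow (ne_of_gt hp0)]
      simp [hz0]
  -- Step 4: sum bound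
  have step4 : ∑ i, |P.mulVec z i| ^ p ≤ a ^ p * (K:ℝ) ^ (p-1) * ((s:ℝ) * ∑ j, |z j| ^ p) := by
    calc ∑ i, |P.mulVec z i| ^ p
        ≤ ∑ i, a ^ p * ((K:ℝ) ^ (p-1) * ∑ j ∈ B i, |z j| ^ p) :=
          Finset.sum_le_sum fun i _ => step2 i
      _ = a ^ p * (K:ℝ) ^ (p-1) * ∑ i, ∑ j ∈ B i, |z j| ^ p := by
          rw [← Finset.mul_sum, ← Finset.mul_sum]; ring
      _ = a ^ p * (K:ℝ) ^ (p-1) * ((s:ℝ) * ∑ j, |z j| ^ p) := by rw [step3]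
  -- Step 5: conclude
  have hT : (0:ℝ) ≤ ∑ j, |z j| ^ p :=
    Finset.sum_nonneg fun j _ => Real.rpow_nonneg (abs_nonneg _) _
  have ha2 : a ^ p = (s:ℝ) ^ (-(p/2)) := by
    rw [hadef, ← Real.rpow_mul hs.le]
    congr 1; ring
  have hcoef : a ^ p * (K:ℝ) ^ (p-1) * (s:ℝ)
      = (s:ℝ) ^ (1 - p/2) * (K:ℝ) ^ (p-1) := by
    have h5 : (s:ℝ) ^ (-(p/2)) * (s:ℝ) ^ (1:ℝ) = (s:ℝ) ^ (1 - p/2) := by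
      rw [← Real.rpow_add hs]; congr 1; ring
    rw [ha2, ← h5, Real.rpow_one]; ring
  unfold pnorm
  have hmain : (∑ i, |P.mulVec z i| ^ p) ^ (1/p)
      ≤ ((s:ℝ) ^ (1 - p/2) * (K:ℝ) ^ (p-1) * ∑ j, |z j| ^ p) ^ (1/p) := by
    apply Real.rpow_le_rpow (Finset.sum_nonneg fun i _ => Real.rpow_nonneg (abs_nonneg _) _)
      _ (by positivity)
    calc ∑ i, |P.mulVec z i| ^ p
        ≤ a ^ p * (K:ℝ) ^ (p-1) * ((s:ℝ) * ∑ j, |z j| ^ p) := step4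
      _ = (s:ℝ) ^ (1 - p/2) * (K:ℝ) ^ (p-1) * ∑ j, |z j| ^ p := by
          rw [← hcoef]; ring
  have hpne : p ≠ 0 := ne_of_gt hp0
  have e1 : (1 - p/2) * (1/p) = 1/p - 1/2 := by
    rw [sub_mul, one_mul, div_mul_div_comm, mul_one]
    congr 1
    rw [div_eq_div_iff (by positivity) two_ne_zero]
    ring
  have e2 : (p - 1) * (1/p) = 1 - 1/p := by field_simp
  refine hmain.trans_eq ?_
  rw [Real.mul_rpow (by positivity) hT,
    Real.mul_rpow (Real.rpow_nonneg hs.le _) (Real.rpow_nonneg hK.le _),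
    ← Real.rpow_mul hs.le, ← Real.rpow_mul hK.le, e1, e2]
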